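/- For B_n, p=2, the groundstates of the Steinberg module [Q + α_n/√2] have conformal dimension −n/8 + 1/2 and there are exactly 2n of them, given by Q ± α_{k…n}^⊖ for k=1,…,n, where α_{k…n}^⊖ = (Σ_{i=k}^n α_i)/√2. -/

import Mathlib

open scoped RealInnerProductSpace

section Aux
variable {V : Type*} [NormedAddCommGroup V] [InnerProductSpace ℝ V]
variable {n : ℕ} {α : Fin n → V}

noncomputable def Tsum (α : Fin n → V) (k : Fin n) : V :=
  ∑ i ∈ Finset.univ.filter (fun i : Fin n => k ≤ i), α i

lemma peel {a b : Fin n} (hb : b.val = a.val + 1) :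
    Finset.univ.filter (fun i : Fin n => a ≤ i)
      = insert a (Finset.univ.filter (fun i : Fin n => b ≤ i)) := by
  ext i
  simp only [Finset.mem_filter, Finset.mem_univ, true_and, Finset.mem_insert, Fin.le_def,
    Fin.ext_iff, hb]
  omega

lemma a_not_mem {a b : Fin n} (hb : b.val = a.val + 1) :
    a ∉ Finset.univ.filter (fun i : Fin n => b ≤ i) := by
  simp [Fin.le_def, hb]

lemma sumA (hdiag : ∀ i : Fin n, ⟪α i, α i⟫ = if i.val = n - 1 then 2 else 4)
    (hadj : ∀ i j : Fin n, j.val = i.val + 1 → ⟪α i, α j⟫ = -2)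
    (hfar : ∀ i j : Fin n, i.val + 1 < j.val → ⟪α i, α j⟫ = 0)
    (j : Fin n) :
    ∑ i ∈ Finset.univ.filter (fun i : Fin n => j ≤ i), ⟪α i, α j⟫ = 2 := by
  rcases eq_or_ne j.val (n-1) with hj | hj
  · have hflt : Finset.univ.filter (fun i : Fin n => j ≤ i) = {j} := by
      ext i
      simp only [Finset.mem_filter, Finset.mem_univ, true_and, Fin.le_def, Finset.mem_singleton,
        Fin.ext_iff]
      have := i.isLt
      omega
    rw [hflt, Finset.sum_singleton, hdiag j, if_pos hj]
  · have hjn : j.val + 1 < n := by have := j.isLt; omega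
    rw [peel (a := j) (b := ⟨j.val+1, hjn⟩) rfl, Finset.sum_insert (a_not_mem rfl)]
    have h2 : ∑ i ∈ Finset.univ.filter (fun i : Fin n => (⟨j.val+1, hjn⟩ : Fin n) ≤ i),
        ⟪α i, α j⟫ = -2 := by
      rw [Finset.sum_eq_single_of_mem (⟨j.val+1, hjn⟩ : Fin n)
        (by simp [Finset.mem_filter])]
      · rw [real_inner_comm]; exact hadj j _ rfl
      · intro i hi hne
        simp only [Finset.mem_filter, Finset.mem_univ, true_and, Fin.le_def] at hi
        rw [real_inner_comm]
        refine hfar j i ?_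
        rcases Nat.lt_or_ge (j.val+1) i.val with h | h
        · exact h
        · exact absurd (Fin.ext (show i.val = j.val + 1 by omega)) hne
    rw [h2, hdiag j, if_neg hj]; norm_num

lemma sumB (hdiag : ∀ i : Fin n, ⟪α i, α i⟫ = if i.val = n - 1 then 2 else 4)
    (hadj : ∀ i j : Fin n, j.val = i.val + 1 → ⟪α i, α j⟫ = -2)
    (hfar : ∀ i j : Fin n, i.val + 1 < j.val → ⟪α i, α j⟫ = 0)
    (k j : Fin n) (hk : k < j) :
    ∑ i ∈ Finset.univ.filter (fun i : Fin n => k ≤ i), ⟪α i, α j⟫ = 0 := by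
  have hj1 : 0 < j.val := lt_of_le_of_lt (Nat.zero_le _) hk
  set jm : Fin n := ⟨j.val - 1, lt_trans (by omega) j.isLt⟩ with hjm
  have hsub : Finset.univ.filter (fun i : Fin n => jm ≤ i)
      ⊆ Finset.univ.filter (fun i : Fin n => k ≤ i) := by
    intro i hi
    simp only [Finset.mem_filter, Finset.mem_univ, true_and, Fin.le_def] at *
    have : k.val < j.val := hk
    have hjv : jm.val = j.val - 1 := rfl
    omega
  rw [← Finset.sum_subset hsub (by
    intro i hi hni
    simp only [Finset.mem_filter, Finset.mem_univ, true_and, Fin.le_def, not_le] at hi hni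
    exact hfar i j (by have hjv : jm.val = j.val - 1 := rfl; omega))]
  have hjj : j.val = jm.val + 1 := show j.val = j.val - 1 + 1 by omega
  rw [peel (a := jm) (b := j) hjj, Finset.sum_insert (a_not_mem hjj)]
  rw [sumA hdiag hadj hfar j, hadj jm j hjj]
  norm_num


lemma gramT (hdiag : ∀ i : Fin n, ⟪α i, α i⟫ = if i.val = n - 1 then 2 else 4)
    (hadj : ∀ i j : Fin n, j.val = i.val + 1 → ⟪α i, α j⟫ = -2)
    (hfar : ∀ i j : Fin n, i.val + 1 < j.val → ⟪α i, α j⟫ = 0)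
    (k l : Fin n) : ⟪Tsum α k, Tsum α l⟫ = if k = l then 2 else 0 := by
  suffices H : ∀ k l : Fin n, k ≤ l → ⟪Tsum α k, Tsum α l⟫ = if k = l then 2 else 0 by
    rcases le_total k l with hkl | hkl
    · exact H k l hkl
    · rw [real_inner_comm, H l k hkl]
      by_cases he : k = l
      · simp [he]
      · rw [if_neg (fun hc => he hc.symm), if_neg he]
  intro k l hkl
  rw [show Tsum α l = ∑ j ∈ Finset.univ.filter (fun i : Fin n => l ≤ i), α j from rfl,
    inner_sum]
  have hterm : ∀ j ∈ Finset.univ.filter (fun i : Fin n => l ≤ i),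
      ⟪Tsum α k, α j⟫ = if j = k then 2 else 0 := by
    intro j hj
    simp only [Finset.mem_filter, Finset.mem_univ, true_and] at hj
    rw [show Tsum α k = ∑ i ∈ Finset.univ.filter (fun i : Fin n => k ≤ i), α i from rfl,
      sum_inner]
    rcases eq_or_ne j k with rfl | hne
    · rw [if_pos rfl, sumA hdiag hadj hfar j]
    · rw [if_neg hne]
      exact sumB hdiag hadj hfar k j (lt_of_le_of_ne (le_trans hkl hj) (Ne.symm hne))
  rw [Finset.sum_congr rfl hterm, Finset.sum_ite_eq' _ k (fun _ => (2:ℝ))]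
  by_cases hkeq : k = l
  · subst hkeq; simp
  · have hnm : k ∉ Finset.univ.filter (fun i : Fin n => l ≤ i) := by
      simp only [Finset.mem_filter, Finset.mem_univ, true_and]
      exact fun hc => hkeq (le_antisymm hkl hc)
    rw [if_neg hnm, if_neg hkeq]

noncomputable def Evec (α : Fin n → V) (k : Fin n) : V := (Real.sqrt 2)⁻¹ • Tsum α k

lemma gramE (hdiag : ∀ i : Fin n, ⟪α i, α i⟫ = if i.val = n - 1 then 2 else 4)
    (hadj : ∀ i j : Fin n, j.val = i.val + 1 → ⟪α i, α j⟫ = -2)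
    (hfar : ∀ i j : Fin n, i.val + 1 < j.val → ⟪α i, α j⟫ = 0)
    (k l : Fin n) : ⟪Evec α k, Evec α l⟫ = if k = l then 1 else 0 := by
  have hs2 : Real.sqrt 2 * Real.sqrt 2 = 2 := Real.mul_self_sqrt (by norm_num)
  have hs0 : Real.sqrt 2 ≠ 0 := by positivity
  rw [Evec, Evec, real_inner_smul_left, real_inner_smul_right, gramT hdiag hadj hfar]
  by_cases hkl : k = l
  · rw [if_pos hkl, if_pos hkl]
    field_simp
    rw [sq, hs2]
  · rw [if_neg hkl, if_neg hkl]; ring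

lemma inner_combo (hdiag : ∀ i : Fin n, ⟪α i, α i⟫ = if i.val = n - 1 then 2 else 4)
    (hadj : ∀ i j : Fin n, j.val = i.val + 1 → ⟪α i, α j⟫ = -2)
    (hfar : ∀ i j : Fin n, i.val + 1 < j.val → ⟪α i, α j⟫ = 0)
    (m m' : Fin n → ℝ) :
    ⟪∑ k, m k • Evec α k, ∑ k, m' k • Evec α k⟫ = ∑ k, m k * m' k := by
  rw [sum_inner]
  refine Finset.sum_congr rfl fun k _ => ?_
  rw [real_inner_smul_left, inner_sum]
  have hterm : ∀ l ∈ (Finset.univ : Finset (Fin n)),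
      ⟪Evec α k, m' l • Evec α l⟫ = if l = k then m' l else 0 := by
    intro l _
    rw [real_inner_smul_right, gramE hdiag hadj hfar]
    rcases eq_or_ne l k with rfl | hh
    · simp
    · rw [if_neg (fun hc => hh hc.symm), if_neg hh, mul_zero]
  rw [Finset.sum_congr rfl hterm, Finset.sum_ite_eq' _ k m', if_pos (Finset.mem_univ k)]

end Aux


theorem stmt_10 {V : Type*} [NormedAddCommGroup V] [InnerProductSpace ℝ V]
    (n : ℕ) (hn : 0 < n) (α : Fin n → V)
    (hdiag : ∀ i : Fin n, ⟪α i, α i⟫ = if i.val = n - 1 then 2 else 4)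
    (hadj : ∀ i j : Fin n, j.val = i.val + 1 → ⟪α i, α j⟫ = -2)
    (hfar : ∀ i j : Fin n, i.val + 1 < j.val → ⟪α i, α j⟫ = 0)
    (hlin : LinearIndependent ℝ α) :
    let Q : V := (1/(2 * Real.sqrt 2)) • ∑ j : Fin n, ((j.val : ℝ) + 1) • α j
    let e : Fin n → V := fun k =>
      (Real.sqrt 2)⁻¹ • ∑ i ∈ Finset.univ.filter (fun i : Fin n => k ≤ i), α i
    let L : Submodule ℤ V := Submodule.span ℤ
      (Set.range fun i => Real.sqrt 2 • ((2 / ⟪α i, α i⟫) • α i))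
    let h : V → ℝ := fun μ => 1/2 * ⟪μ - Q, μ - Q⟫ - 1/2 * ⟪Q, Q⟫
    let C : Set V := {μ | μ - (Q + (Real.sqrt 2)⁻¹ • α ⟨n - 1, Nat.sub_lt hn Nat.one_pos⟩) ∈ L}
    (∀ k, (Q + e k ∈ C) ∧ (Q - e k ∈ C)
        ∧ h (Q + e k) = -((n : ℝ)/8) + 1/2 ∧ h (Q - e k) = -((n : ℝ)/8) + 1/2)
    ∧ (∀ μ ∈ C, -((n : ℝ)/8) + 1/2 ≤ h μ)
    ∧ {μ ∈ C | h μ = -((n : ℝ)/8) + 1/2} = {μ | ∃ k, μ = Q + e k ∨ μ = Q - e k}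
    ∧ Set.ncard {μ ∈ C | h μ = -((n : ℝ)/8) + 1/2} = 2 * n := by
  intro Q e L h C
  have hs0 : Real.sqrt 2 ≠ 0 := by positivity
  have hs2 : Real.sqrt 2 * Real.sqrt 2 = 2 := Real.mul_self_sqrt (by norm_num)
  have hE : e = Evec α := rfl
  set lst : Fin n := ⟨n - 1, Nat.sub_lt hn Nat.one_pos⟩ with hlst
  have gram : ∀ k l : Fin n, ⟪e k, e l⟫ = if k = l then 1 else 0 := by
    rw [hE]; exact gramE hdiag hadj hfar
  have combo : ∀ m m' : Fin n → ℝ,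
      ⟪∑ k, m k • e k, ∑ k, m' k • e k⟫ = ∑ k, m k * m' k := by
    rw [hE]; exact inner_combo hdiag hadj hfar
  have hT : ∀ k, Tsum α k = Real.sqrt 2 • e k := by
    intro k
    rw [hE, Evec, smul_smul, mul_inv_cancel₀ hs0, one_smul]
  -- Q in coordinates
  have hQ : Q = ∑ k, (1/2 : ℝ) • e k := by
    have h1 : ∑ k : Fin n, Tsum α k = ∑ j : Fin n, ((j.val : ℝ) + 1) • α j := by
      calc ∑ k : Fin n, Tsum α k
          = ∑ k : Fin n, ∑ i : Fin n, if k ≤ i then α i else 0 := by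
            refine Finset.sum_congr rfl fun k _ => ?_
            rw [Tsum, Finset.sum_filter]
        _ = ∑ i : Fin n, ∑ k : Fin n, if k ≤ i then α i else 0 := Finset.sum_comm
        _ = ∑ i : Fin n, ((i.val : ℝ) + 1) • α i := by
            refine Finset.sum_congr rfl fun i _ => ?_
            rw [← Finset.sum_filter, Finset.sum_const]
            have hc : (Finset.univ.filter (fun k : Fin n => k ≤ i)).card = i.val + 1 := by
              have hIic : Finset.univ.filter (fun k : Fin n => k ≤ i) = Finset.Iic i := by
                ext k; simp
              rw [hIic, Fin.card_Iic]
            rw [hc, ← Nat.cast_smul_eq_nsmul ℝ]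
            norm_num
    show (1/(2 * Real.sqrt 2)) • ∑ j : Fin n, ((j.val : ℝ) + 1) • α j = _
    rw [← h1, Finset.smul_sum]
    refine Finset.sum_congr rfl fun k _ => ?_
    rw [hT k, smul_smul]
    congr 1
    field_simp
  have hQQ : ⟪Q, Q⟫ = (n : ℝ)/4 := by
    rw [hQ, combo]
    simp only [Finset.sum_const, Finset.card_univ, Fintype.card_fin, nsmul_eq_mul]
    ring
  -- last basis vector
  have hel : (Real.sqrt 2)⁻¹ • α lst = e lst := by
    have hflt : Finset.univ.filter (fun i : Fin n => lst ≤ i) = {lst} := by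
      ext i
      simp only [Finset.mem_filter, Finset.mem_univ, true_and, Fin.le_def,
        Finset.mem_singleton, Fin.ext_iff]
      have := i.isLt
      show n - 1 ≤ i.val ↔ i.val = n - 1
      omega
    rw [hE]
    show _ = (Real.sqrt 2)⁻¹ • Tsum α lst
    rw [Tsum, hflt, Finset.sum_singleton]
  have hαlast : α lst = Real.sqrt 2 • e lst := by
    rw [← hel, smul_smul, mul_inv_cancel₀ hs0, one_smul]
  have hαi : ∀ (i : Fin n) (hi : i.val + 1 < n),
      α i = Real.sqrt 2 • (e i - e ⟨i.val+1, hi⟩) := by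
    intro i hi
    have hsp : Tsum α i = α i + Tsum α ⟨i.val+1, hi⟩ := by
      rw [Tsum, peel (a := i) (b := ⟨i.val+1, hi⟩) rfl, Finset.sum_insert (a_not_mem rfl)]
      rfl
    have : α i = Tsum α i - Tsum α ⟨i.val+1, hi⟩ := by rw [hsp]; abel
    rw [this, hT, hT, ← smul_sub]
  -- generators
  have hgen : ∀ i : Fin n, Real.sqrt 2 • ((2 / ⟪α i, α i⟫) • α i) =
      if hi : i.val + 1 < n then e i - e ⟨i.val+1, hi⟩ else (2:ℝ) • e lst := by
    intro i
    by_cases hi : i.val + 1 < n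
    · rw [dif_pos hi]
      have hii : ⟪α i, α i⟫ = 4 := by
        rw [hdiag, if_neg (by omega)]
      rw [hii, hαi i hi, smul_smul, smul_smul]
      have hsc : Real.sqrt 2 * (2/4) * Real.sqrt 2 = 1 := by
        linear_combination (1/2) * hs2
      rw [hsc, one_smul]
    · have hieq : i = lst := Fin.ext (by have := i.isLt; show i.val = n - 1; omega)
      rw [dif_neg hi, hieq, hdiag, if_pos (show lst.val = n - 1 from rfl)]
      rw [hαlast, smul_smul, smul_smul]
      have hsc : Real.sqrt 2 * (2/2) * Real.sqrt 2 = 2 := by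
        linear_combination hs2
      rw [hsc]
  have hgen_mem1 : ∀ (i : Fin n) (hi : i.val + 1 < n), e i - e ⟨i.val+1, hi⟩ ∈ L := by
    intro i hi
    have hg := hgen i
    rw [dif_pos hi] at hg
    rw [← hg]
    exact Submodule.subset_span ⟨i, rfl⟩
  have hgen_mem2 : (2:ℝ) • e lst ∈ L := by
    have hg := hgen lst
    rw [dif_neg (show ¬ (lst.val + 1 < n) by show ¬ (n - 1 + 1 < n); omega)] at hg
    rw [← hg]
    exact Submodule.subset_span ⟨lst, rfl⟩
  have hchain : ∀ k : Fin n, e k - e lst ∈ L := by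
    suffices H : ∀ d, ∀ k : Fin n, n - 1 - k.val = d → e k - e lst ∈ L by
      intro k; exact H _ k rfl
    intro d
    induction d with
    | zero =>
      intro k hk
      have : k = lst := Fin.ext (by have := k.isLt; show k.val = n - 1; omega)
      rw [this, sub_self]
      exact zero_mem L
    | succ d ih =>
      intro k hk
      have hi : k.val + 1 < n := by have := k.isLt; omega
      have h2 := ih ⟨k.val+1, hi⟩ (by show n - 1 - (k.val + 1) = d; omega)
      have h3 := add_mem (hgen_mem1 k hi) h2
      rwa [show e k - e ⟨k.val+1, hi⟩ + (e ⟨k.val+1, hi⟩ - e lst) = e k - e lst by abel] at h3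
  have hCmem : ∀ μ : V, μ ∈ C ↔ μ - (Q + e lst) ∈ L := by
    intro μ
    show μ - (Q + (Real.sqrt 2)⁻¹ • α lst) ∈ L ↔ _
    rw [hel]
  -- Part 1
  have part1 : ∀ k, (Q + e k ∈ C) ∧ (Q - e k ∈ C)
      ∧ h (Q + e k) = -((n : ℝ)/8) + 1/2 ∧ h (Q - e k) = -((n : ℝ)/8) + 1/2 := by
    intro k
    refine ⟨?_, ?_, ?_, ?_⟩
    · rw [hCmem, show Q + e k - (Q + e lst) = e k - e lst by abel]
      exact hchain k
    · rw [hCmem, show Q - e k - (Q + e lst) = -(e k - e lst) - (2:ℝ) • e lst by module]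
      exact sub_mem (neg_mem (hchain k)) hgen_mem2
    · show 1/2 * ⟪Q + e k - Q, Q + e k - Q⟫ - 1/2 * ⟪Q, Q⟫ = -((n : ℝ)/8) + 1/2
      rw [add_sub_cancel_left, hQQ]
      have hg := gram k k
      rw [if_pos rfl] at hg
      rw [hg]; ring
    · show 1/2 * ⟪Q - e k - Q, Q - e k - Q⟫ - 1/2 * ⟪Q, Q⟫ = -((n : ℝ)/8) + 1/2
      rw [show Q - e k - Q = -(e k) by abel, inner_neg_neg, hQQ]
      have hg := gram k k
      rw [if_pos rfl] at hg
      rw [hg]; ring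
  -- coordinates of lattice elements
  have hLco : ∀ v ∈ L, ∃ m : Fin n → ℤ, Even (∑ k, m k) ∧ v = ∑ k, ((m k : ℝ)) • e k := by
    intro v hv
    induction hv using Submodule.span_induction with
    | mem x hx =>
      obtain ⟨i, rfl⟩ := hx
      have hg := hgen i
      by_cases hi : i.val + 1 < n
      · rw [dif_pos hi] at hg
        set i' : Fin n := ⟨i.val+1, hi⟩ with hi'
        have hne : i' ≠ i := by
          intro hc
          have hv : i.val + 1 = i.val := congrArg Fin.val hc
          omega
        refine ⟨fun k => (if k = i then 1 else 0) + (if k = i' then -1 else 0), ?_, ?_⟩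
        · rw [Finset.sum_add_distrib, Finset.sum_ite_eq' _ i (fun _ => (1:ℤ)),
            Finset.sum_ite_eq' _ i' (fun _ => (-1:ℤ))]
          simp
        · show Real.sqrt 2 • ((2 / ⟪α i, α i⟫) • α i) = _
          rw [hg]
          have hpt : ∀ k : Fin n,
              ((((if k = i then (1:ℤ) else 0) + (if k = i' then -1 else 0)) : ℤ) : ℝ) • e k
              = (if k = i then e k else 0) + (if k = i' then -e k else 0) := by
            intro k
            by_cases h1 : k = i
            · subst h1
              have h2 : ¬ (k = i') := fun hc => by
                have hv : k.val = k.val + 1 := congrArg Fin.val hc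
                omega
              simp [h2]
            · by_cases h2 : k = i'
              · subst h2; simp [h1]
              · simp [h1, h2]
          rw [Finset.sum_congr rfl (fun k _ => hpt k), Finset.sum_add_distrib,
            Finset.sum_ite_eq' _ i (fun k => e k), Finset.sum_ite_eq' _ i' (fun k => -e k)]
          simp [sub_eq_add_neg]
      · rw [dif_neg hi] at hg
        refine ⟨fun k => if k = lst then 2 else 0, ?_, ?_⟩
        · rw [Finset.sum_ite_eq' _ lst (fun _ => (2:ℤ))]
          simp
        · show Real.sqrt 2 • ((2 / ⟪α i, α i⟫) • α i) = _
          rw [hg]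
          have hpt : ∀ k : Fin n, (((if k = lst then (2:ℤ) else 0) : ℤ) : ℝ) • e k
              = if k = lst then (2:ℝ) • e k else 0 := by
            intro k
            by_cases h1 : k = lst <;> simp [h1]
          rw [Finset.sum_congr rfl (fun k _ => hpt k),
            Finset.sum_ite_eq' _ lst (fun k => (2:ℝ) • e k), if_pos (Finset.mem_univ _)]
    | zero => exact ⟨0, by simp, by simp⟩
    | add x y hx hy ihx ihy =>
      obtain ⟨m1, hm1e, rfl⟩ := ihx
      obtain ⟨m2, hm2e, rfl⟩ := ihy
      refine ⟨m1 + m2, ?_, ?_⟩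
      · rw [show ∑ k, (m1 + m2) k = (∑ k, m1 k) + ∑ k, m2 k by
          rw [← Finset.sum_add_distrib]; rfl]
        exact hm1e.add hm2e
      · rw [← Finset.sum_add_distrib]
        refine Finset.sum_congr rfl fun k _ => ?_
        show (m1 k : ℝ) • e k + (m2 k : ℝ) • e k = ((m1 k + m2 k : ℤ) : ℝ) • e k
        push_cast
        rw [add_smul]
    | smul a x hx ihx =>
      obtain ⟨m, hme, rfl⟩ := ihx
      refine ⟨a • m, ?_, ?_⟩
      · rw [show ∑ k, (a • m) k = a * ∑ k, m k by
          rw [Finset.mul_sum]; rfl]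
        exact hme.mul_left a
      · rw [Finset.smul_sum]
        refine Finset.sum_congr rfl fun k _ => ?_
        rw [← Int.cast_smul_eq_zsmul ℝ a, smul_smul]
        show ((a : ℝ) * (m k : ℝ)) • e k = ((a * m k : ℤ) : ℝ) • e k
        push_cast
        ring_nf
  -- coset coordinates
  have hCco : ∀ μ ∈ C, ∃ m : Fin n → ℤ, ¬ Even (∑ k, m k)
      ∧ μ - Q = ∑ k, ((m k : ℝ)) • e k := by
    intro μ hμ
    rw [hCmem] at hμ
    obtain ⟨m, hme, hmv⟩ := hLco _ hμ
    refine ⟨fun k => m k + (if k = lst then 1 else 0), ?_, ?_⟩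
    · rw [Finset.sum_add_distrib, Finset.sum_ite_eq' _ lst (fun _ => (1:ℤ)),
        if_pos (Finset.mem_univ _), Int.even_add_one]
      intro hcon
      exact hcon hme
    · have hsplit : μ - Q = (μ - (Q + e lst)) + e lst := by abel
      rw [hsplit, hmv]
      have hpt : ∀ k : Fin n, (((m k + (if k = lst then (1:ℤ) else 0)) : ℤ) : ℝ) • e k
          = ((m k : ℝ)) • e k + (if k = lst then e k else 0) := by
        intro k
        by_cases h1 : k = lst <;> · push_cast [h1]; simp [add_smul]
      rw [Finset.sum_congr rfl (fun k _ => hpt k), Finset.sum_add_distrib,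
        Finset.sum_ite_eq' _ lst (fun k => e k), if_pos (Finset.mem_univ _)]
  -- value of h in coordinates
  have hval : ∀ (μ : V) (m : Fin n → ℤ), μ - Q = ∑ k, ((m k : ℝ)) • e k →
      h μ = 1/2 * ((∑ k, m k * m k : ℤ) : ℝ) - (n : ℝ)/8 := by
    intro μ m hm
    show 1/2 * ⟪μ - Q, μ - Q⟫ - 1/2 * ⟪Q, Q⟫ = _
    rw [hm, combo, hQQ]
    push_cast
    ring
  have hsum_sq : ∀ m : Fin n → ℤ, ¬ Even (∑ k, m k) → (1:ℤ) ≤ ∑ k, m k * m k := by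
    intro m hm
    have hex : ∃ k, m k ≠ 0 := by
      by_contra hc
      push_neg at hc
      exact hm (by rw [Finset.sum_eq_zero (fun k _ => hc k)]; exact Even.zero)
    obtain ⟨k0, hk0⟩ := hex
    have h1 : 1 ≤ m k0 * m k0 := by
      have := mul_self_pos.mpr hk0
      omega
    exact le_trans h1 (Finset.single_le_sum (fun i _ => mul_self_nonneg (m i))
      (Finset.mem_univ k0))
  -- Part 2
  have part2 : ∀ μ ∈ C, -((n : ℝ)/8) + 1/2 ≤ h μ := by
    intro μ hμ
    obtain ⟨m, hodd, hco⟩ := hCco μ hμ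
    rw [hval μ m hco]
    have h1 := hsum_sq m hodd
    have h2 : (1:ℝ) ≤ ((∑ k, m k * m k : ℤ) : ℝ) := by exact_mod_cast h1
    linarith
  -- injectivity facts
  have gram_self : ∀ k : Fin n, ⟪e k, e k⟫ = 1 := by
    intro k; have := gram k k; rwa [if_pos rfl] at this
  have key1 : ∀ a b : Fin n, e a = e b → a = b := by
    intro a b hab
    by_contra hne
    have h1 := gram a b
    rw [if_neg hne, hab, gram_self b] at h1
    norm_num at h1
  have key2 : ∀ a b : Fin n, e a ≠ -e b := by
    intro a b hab
    have hg := gram a b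
    rw [hab, inner_neg_left, gram_self b] at hg
    by_cases hc : a = b
    · rw [if_pos hc] at hg; norm_num at hg
    · rw [if_neg hc] at hg; norm_num at hg
  -- Part 3
  have part3 : {μ ∈ C | h μ = -((n : ℝ)/8) + 1/2} = {μ | ∃ k, μ = Q + e k ∨ μ = Q - e k} := by
    ext μ
    constructor
    · rintro ⟨hμC, hμh⟩
      obtain ⟨m, hodd, hco⟩ := hCco μ hμC
      rw [hval μ m hco] at hμh
      have hX : ((∑ k, m k * m k : ℤ) : ℝ) = 1 := by linarith
      have hXZ : (∑ k, m k * m k : ℤ) = 1 := by exact_mod_cast hX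
      have hex : ∃ k0, m k0 ≠ 0 := by
        by_contra hc
        push_neg at hc
        rw [Finset.sum_eq_zero (fun k _ => by rw [hc k]; ring)] at hXZ
        exact one_ne_zero hXZ.symm
      obtain ⟨k0, hk0⟩ := hex
      have hterm_le : m k0 * m k0 ≤ 1 := by
        rw [← hXZ]
        exact Finset.single_le_sum (fun i _ => mul_self_nonneg (m i)) (Finset.mem_univ k0)
      have hterm_ge : 1 ≤ m k0 * m k0 := by
        have := mul_self_pos.mpr hk0
        omega
      have hterm : m k0 * m k0 = 1 := le_antisymm hterm_le hterm_ge
      have hrest : ∀ j, j ≠ k0 → m j = 0 := by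
        intro j hj
        have hsplit : ∑ k, m k * m k = m k0 * m k0 + ∑ k ∈ Finset.univ.erase k0, m k * m k :=
          (Finset.add_sum_erase Finset.univ _ (Finset.mem_univ k0)).symm
        have hzero : ∑ k ∈ Finset.univ.erase k0, m k * m k = 0 := by omega
        have hj0 : m j * m j = 0 :=
          (Finset.sum_eq_zero_iff_of_nonneg
            (fun i _ => mul_self_nonneg (m i))).mp hzero j
            (Finset.mem_erase.mpr ⟨hj, Finset.mem_univ j⟩)
        exact mul_self_eq_zero.mp hj0
      have hμQ : μ - Q = (m k0 : ℝ) • e k0 := by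
        rw [hco, Finset.sum_eq_single k0
          (fun j _ hj => by rw [hrest j hj]; simp)
          (fun hcc => absurd (Finset.mem_univ k0) hcc)]
      rcases mul_self_eq_one_iff.mp hterm with h1 | h1
      · refine ⟨k0, Or.inl ?_⟩
        rw [h1] at hμQ
        push_cast at hμQ
        rw [one_smul] at hμQ
        have := sub_eq_iff_eq_add.mp hμQ
        rw [this, add_comm]
      · refine ⟨k0, Or.inr ?_⟩
        rw [h1] at hμQ
        push_cast at hμQ
        rw [neg_one_smul] at hμQ
        have := sub_eq_iff_eq_add.mp hμQ
        rw [this, neg_add_eq_sub]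
    · rintro ⟨k, hk | hk⟩
      · exact hk ▸ ⟨(part1 k).1, (part1 k).2.2.1⟩
      · exact hk ▸ ⟨(part1 k).2.1, (part1 k).2.2.2⟩
  -- Part 4
  have part4 : Set.ncard {μ ∈ C | h μ = -((n : ℝ)/8) + 1/2} = 2 * n := by
    rw [part3]
    have hrange : {μ : V | ∃ k, μ = Q + e k ∨ μ = Q - e k}
        = Set.range (Sum.elim (fun k : Fin n => Q + e k) (fun k : Fin n => Q - e k)) := by
      ext μ
      constructor
      · rintro ⟨k, hk | hk⟩
        · exact ⟨Sum.inl k, hk.symm⟩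
        · exact ⟨Sum.inr k, hk.symm⟩
      · rintro ⟨(k | k), rfl⟩
        · exact ⟨k, Or.inl rfl⟩
        · exact ⟨k, Or.inr rfl⟩
    have hinj : Function.Injective
        (Sum.elim (fun k : Fin n => Q + e k) (fun k : Fin n => Q - e k)) := by
      rintro (a | a) (b | b) hab <;> simp only [Sum.elim_inl, Sum.elim_inr] at hab
      · rw [key1 a b (add_left_cancel hab)]
      · exfalso
        have : e a = -e b := by
          have h' : Q + e a = Q + -e b := by rw [hab, sub_eq_add_neg]
          exact add_left_cancel h'
        exact key2 a b this
      · exfalso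
        have : e b = -e a := by
          have h' : Q + e b = Q + -e a := by rw [← hab, sub_eq_add_neg]
          exact add_left_cancel h'
        exact key2 b a this
      · have : e a = e b := by
          have h' : -e a = -e b := by
            have h1 : Q + -e a = Q + -e b := by
              rw [← sub_eq_add_neg, ← sub_eq_add_neg, hab]
            exact add_left_cancel h1
          exact neg_inj.mp h'
        rw [key1 a b this]
    rw [hrange, ← Set.image_univ, Set.ncard_image_of_injective _ hinj, Set.ncard_univ,
      Nat.card_eq_fintype_card]
    simp [Fintype.card_sum]
    omega
  exact ⟨part1, part2, part3, part4⟩
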